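/- Let M ≥ 0 be a real number, let β be a complex number with |β| ≤ M, and let q be a real number with q > √2·M + 1. Then |q − 1 − β|² · |q + 1 − β|² ≤ |q − β|⁴. Equivalently, the real quadratic p(x) = (x − a)² + b², where β = a + bi, satisfies p(q−1)·p(q+1) ≤ p(q)². -/

import Mathlib

/-- If `M ≥ 0`, `β` is a complex number with `|β| ≤ M`, and `q` is a real number
with `q > √2·M + 1`, then `|q - 1 - β|² · |q + 1 - β|² ≤ |q - β|⁴`; equivalently, with
`β = a + bi`, the real quadratic `p(x) = (x - a)² + b²` satisfies `p(q-1)·p(q+1) ≤ p(q)²`. -/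
theorem quadratic_factor_log_concave (M : ℝ) (hM : 0 ≤ M) (β : ℂ) (hβ : ‖β‖ ≤ M)
    (q : ℝ) (hq : Real.sqrt 2 * M + 1 < q) :
    ‖(q : ℂ) - 1 - β‖ ^ 2 * ‖(q : ℂ) + 1 - β‖ ^ 2 ≤
      ‖(q : ℂ) - β‖ ^ 4 := by
  set a := β.re with ha
  set b := β.im with hb
  have habs : a ^ 2 + b ^ 2 ≤ M ^ 2 := by
    have := Complex.sq_norm β
    have h2 : ‖β‖ ^ 2 ≤ M ^ 2 := by
      exact pow_le_pow_left₀ (norm_nonneg β) hβ 2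
    rw [Complex.sq_norm, Complex.normSq_apply] at h2
    nlinarith [h2]
  have hre : |a| ≤ M := le_trans (Complex.abs_re_le_norm β) hβ
  have hs2 : Real.sqrt 2 ^ 2 = 2 := Real.sq_sqrt (by norm_num)
  have hs2pos : (1:ℝ) ≤ Real.sqrt 2 := by
    nlinarith [Real.sqrt_nonneg 2, hs2]
  have h4 : ‖(q : ℂ) - β‖ ^ 4 = (‖(q : ℂ) - β‖ ^ 2) ^ 2 := by ring
  rw [h4, Complex.sq_norm, Complex.sq_norm, Complex.sq_norm]
  simp only [Complex.normSq_apply, Complex.sub_re, Complex.sub_im, Complex.add_re,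
    Complex.add_im, Complex.one_re, Complex.one_im, Complex.ofReal_re, Complex.ofReal_im]
  have haM : -M ≤ a ∧ a ≤ M := abs_le.mp hre
  have hMs : M ≤ Real.sqrt 2 * M := by nlinarith
  have hlow : 0 ≤ Real.sqrt 2 * M + 1 - a := by nlinarith [haM.2]
  have hsq : (Real.sqrt 2 * M + 1 - a) ^ 2 ≤ (q - a) ^ 2 := by
    apply pow_le_pow_left₀ hlow; linarith
  have key : 2 * b ^ 2 + 1 ≤ 2 * (q - a) ^ 2 := by
    nlinarith [sq_nonneg (Real.sqrt 2 * M - 2 * a), hsq, habs, hs2, haM.2]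
  nlinarith [key, sq_nonneg (q - a), sq_nonneg b]
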